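/- Let K be a finite field of characteristic p and ξ ∈ K with Tr_K(ξ) ≠ 0. Let G(X) = 1/(X^p − X + ξ) viewed as a self-map of K̄ ∪ {∞}. Then for every positive integer n, G^{(n)}(∞) ≠ ∞; equivalently, ∞ is not a periodic point of G. -/

import Mathlib

open scoped Classical

private lemma trace_pow_p (p : ℕ) [Fact p.Prime] (K : Type*) [Field K] [Finite K]
    [CharP K p] [Algebra (ZMod p) K] (z : K) :
    Algebra.trace (ZMod p) K (z ^ p) = Algebra.trace (ZMod p) K z := by
  have : PerfectRing K p := by infer_instance
  let e : K ≃ₐ[ZMod p] K :=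
    AlgEquiv.ofRingEquiv (f := (frobeniusEquiv K p : K ≃+* K)) (fun r => by
      simp [frobeniusEquiv_apply, frobenius_def, ← map_pow, ZMod.pow_card])
  have := Algebra.trace_eq_of_algEquiv e z
  simpa [e, AlgEquiv.ofRingEquiv, frobeniusEquiv_apply, frobenius_def] using this

/-- Let `K` be a finite field of characteristic `p` and `ξ ∈ K` with nonzero
absolute trace. View `G(X) = 1/(X^p - X + ξ)` as a self-map of `K̄ ∪ {∞}` (modelled as
`Option K̄`, with `none` playing the role of `∞`, `G(∞) = 0`, and `G(x) = ∞` when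
`g(x) = 0`). Then `G^[n](∞) ≠ ∞` for every `n ≥ 1`; i.e. `∞` is not a periodic point. -/
theorem infinity_not_periodic (p : ℕ) [Fact p.Prime] (K : Type*) [Field K] [Finite K]
    [CharP K p] [Algebra (ZMod p) K] (ξ : K) (hξ : Algebra.trace (ZMod p) K ξ ≠ 0)
    (G : Option (AlgebraicClosure K) → Option (AlgebraicClosure K))
    (hGinf : G none = some 0)
    (hG : ∀ x : AlgebraicClosure K,
      G (some x) = if x ^ p - x + algebraMap K (AlgebraicClosure K) ξ = 0 then none
        else some (x ^ p - x + algebraMap K (AlgebraicClosure K) ξ)⁻¹) :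
    ∀ n : ℕ, 1 ≤ n → G^[n] none ≠ none := by
  set f := algebraMap K (AlgebraicClosure K) with hf
  have hinj : Function.Injective f := (algebraMap K _).injective
  have key : ∀ z : K, z ^ p - z + ξ ≠ 0 := by
    intro z hz
    apply hξ
    have : ξ = z - z ^ p := by linear_combination hz
    rw [this, map_sub, trace_pow_p p K z, sub_self]
  have main : ∀ n : ℕ, 1 ≤ n → ∃ z : K, G^[n] none = some (f z) := by
    intro n hn
    induction n with
    | zero => omega
    | succ m ih =>
      rcases Nat.eq_or_lt_of_le hn with h1 | h1
      · exact ⟨0, by simp [← h1, hGinf]⟩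
      · obtain ⟨z, hz⟩ := ih (by omega)
        refine ⟨(z ^ p - z + ξ)⁻¹, ?_⟩
        have hne : f (z ^ p - z + ξ) ≠ 0 := fun h => key z (hinj (by simpa using h))
        have hval : (f z) ^ p - f z + f ξ = f (z ^ p - z + ξ) := by push_cast [map_add, map_sub, map_pow]; ring
        rw [Function.iterate_succ_apply', hz, hG, hval, if_neg hne, map_inv₀]
  intro n hn h
  obtain ⟨z, hz⟩ := main n hn
  rw [h] at hz
  exact Option.some_ne_none _ hz.symm
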